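/- Let G be a group and S ⊆ G with S ∉ D(G), where D(G) is the inductive family: S ∈ D(G) if S ∩ S⁻¹ ≠ ∅, closed under T ∪ {a}, T ∪ {b} ∈ D(G) ⟹ T ∪ {a*b} ∈ D(G). Then there exists a subsemigroup T of G with S ⊆ T, T ∉ D(G), and such that G \ T is also a subsemigroup of G. -/

import Mathlib

/-- The inductive family `D(G)` of subsets of a group `G`: a set is in `D(G)` if it meets
its own set of inverses, and the family is closed under the rule
`T ∪ {a}, T ∪ {b} ∈ D(G) ⟹ T ∪ {a*b} ∈ D(G)`. -/
inductive RightD {G : Type*} [Group G] : Set G → Prop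
  | base (S : Set G) (a : G) (ha : a ∈ S) (hinv : a⁻¹ ∈ S) : RightD S
  | step (T : Set G) (a b : G) (h1 : RightD (T ∪ {a})) (h2 : RightD (T ∪ {b})) :
      RightD (T ∪ {a * b})

/-- `RightD` is monotone. -/
lemma RightD.mono {G : Type*} [Group G] {S : Set G} (h : RightD S) :
    ∀ S' : Set G, S ⊆ S' → RightD S' := by
  induction h with
  | base S a ha hinv =>
    intro S' hss
    exact RightD.base S' a (hss ha) (hss hinv)
  | step T a b h1 h2 ih1 ih2 =>
    intro S' hss
    have hT : T ⊆ S' := fun x hx => hss (Set.mem_union_left _ hx)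
    have hab : a * b ∈ S' := hss (Set.mem_union_right _ rfl)
    have h1' : RightD (S' ∪ {a}) := ih1 _ (Set.union_subset_union_left _ hT)
    have h2' : RightD (S' ∪ {b}) := ih2 _ (Set.union_subset_union_left _ hT)
    have := RightD.step S' a b h1' h2'
    rwa [Set.union_eq_self_of_subset_right (by simpa using hab)] at this

/-- Compactness: a set in `D(G)` contains a finite set in `D(G)`. -/
lemma RightD.finite {G : Type*} [Group G] {S : Set G} (h : RightD S) :
    ∃ F : Set G, F ⊆ S ∧ F.Finite ∧ RightD F := by
  induction h with
  | base S a ha hinv =>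
    exact ⟨{a, a⁻¹}, by simp [Set.insert_subset_iff, ha, hinv],
      (Set.finite_singleton _).insert _,
      RightD.base _ a (by simp) (by simp)⟩
  | step T a b h1 h2 ih1 ih2 =>
    obtain ⟨F₁, hF₁s, hF₁f, hF₁⟩ := ih1
    obtain ⟨F₂, hF₂s, hF₂f, hF₂⟩ := ih2
    set F₀ : Set G := (F₁ \ {a}) ∪ (F₂ \ {b}) with hF₀
    have hF₀T : F₀ ⊆ T := by
      rintro x (⟨hx, hxa⟩ | ⟨hx, hxb⟩)
      · rcases hF₁s hx with h | h
        · exact h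
        · exact absurd h hxa
      · rcases hF₂s hx with h | h
        · exact h
        · exact absurd h hxb
    have h1' : RightD (F₀ ∪ {a}) := hF₁.mono _ (by
      intro x hx
      by_cases hxa : x = a
      · exact Set.mem_union_right _ hxa
      · exact Set.mem_union_left _ (Set.mem_union_left _ ⟨hx, hxa⟩))
    have h2' : RightD (F₀ ∪ {b}) := hF₂.mono _ (by
      intro x hx
      by_cases hxb : x = b
      · exact Set.mem_union_right _ hxb
      · exact Set.mem_union_left _ (Set.mem_union_right _ ⟨hx, hxb⟩))
    refine ⟨F₀ ∪ {a * b}, Set.union_subset_union_left _ hF₀T,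
      ((hF₁f.diff (t := {a})).union (hF₂f.diff (t := {b}))).union (Set.finite_singleton _),
      RightD.step F₀ a b h1' h2'⟩

theorem stmt10 {G : Type*} [Group G] {S : Set G} (hS : ¬ RightD S) :
    ∃ T : Set G, S ⊆ T ∧ (∀ a ∈ T, ∀ b ∈ T, a * b ∈ T) ∧ ¬ RightD T ∧
      (∀ a ∈ Tᶜ, ∀ b ∈ Tᶜ, a * b ∈ Tᶜ) := by
  -- Zorn's lemma gives a maximal superset of S not in D(G).
  obtain ⟨T, hST, hTmem, hTmax⟩ :
      ∃ T, S ⊆ T ∧ (¬ RightD T) ∧ ∀ T', ¬ RightD T' → T ⊆ T' → T' = T := by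
    obtain ⟨T, hST, hmax⟩ := zorn_subset_nonempty {U : Set G | ¬ RightD U}
      (fun c hc hchain hne => by
        refine ⟨⋃₀ c, ?_, fun s hs => Set.subset_sUnion_of_mem hs⟩
        intro hRD
        obtain ⟨F, hFs, hFf, hFRD⟩ := hRD.finite
        obtain ⟨t, htc, hFt⟩ := (hchain.directedOn).exists_mem_subset_of_finset_subset_biUnion
          (f := id) hne (s := hFf.toFinset) (by simpa [Set.sUnion_eq_biUnion] using hFs)
        exact hc htc (hFRD.mono _ (by simpa using hFt)))
      S hS
    exact ⟨T, hST, hmax.prop, fun T' hT' hTT' => (hmax.eq_of_le hT' hTT').symm⟩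
  -- Any strictly larger set is in D(G).
  have hext : ∀ x : G, x ∉ T → RightD (T ∪ {x}) := by
    intro x hx
    by_contra h
    have := hTmax _ h Set.subset_union_left
    exact hx (this ▸ Set.mem_union_right _ rfl)
  -- T contains no element together with its inverse.
  have hninv : ∀ x ∈ T, x⁻¹ ∉ T := by
    intro x hx hxi
    exact hTmem (RightD.base T x hx hxi)
  -- Complement is a subsemigroup.
  have hcompl : ∀ a ∈ Tᶜ, ∀ b ∈ Tᶜ, a * b ∈ Tᶜ := by
    intro a ha b hb hab
    have := RightD.step T a b (hext a ha) (hext b hb)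
    rw [Set.union_eq_self_of_subset_right (by simpa using hab)] at this
    exact hTmem this
  refine ⟨T, hST, ?_, hTmem, hcompl⟩
  -- T is a subsemigroup.
  intro a ha b hb
  by_contra hab
  have h1 : RightD (T ∪ {a * b}) := hext _ hab
  have h2 : RightD (T ∪ {b⁻¹}) := hext _ (hninv b hb)
  have := RightD.step T (a * b) b⁻¹ h1 h2
  rw [mul_assoc, mul_inv_cancel, mul_one,
    Set.union_eq_self_of_subset_right (by simpa using ha)] at this
  exact hTmem this
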